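/- Fix integers n ≥ 1, m ≥ 1 and a real α > 0, and set c = (n+m-1)·C(n+m-2, n-1). Let T̄, W̄ : [0,∞) → ℝ be continuous functions taking values in [0,1] with T̄(t) → 0 and W̄(t) → 0 as t → ∞, such that T̄ and W̄ are differentiable on (0,∞) with T̄'(t) = W̄(t) - T̄(t) and W̄'(t) = α·c·T̄'(t)·Σ_{i=0}^{n-1} C(n-1,i)·(-1)^i·(1/(m+i))·T̄(t)^{m+i} for all t > 0. Then W̄(t) = α·c·Σ_{i=0}^{n-1} C(n-1,i)·(-1)^i·(1/((m+i)(m+i+1)))·T̄(t)^{m+i+1} for all t > 0, and consequently T̄ satisfies the differential equation T̄'(t) = -T̄(t) + α·c·Σ_{i=0}^{n-1} C(n-1,i)·(-1)^i·(1/((m+i)(m+i+1)))·T̄(t)^{m+i+1}. -/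

import Mathlib

open Filter

/-- Integration step: from the coupled relations `T̄' = W̄ - T̄` and
`W̄' = α c T̄' Σᵢ C(n-1,i) (-1)ⁱ (1/(m+i)) T̄^{m+i}` on `(0,∞)`, with both tails vanishing at
infinity, one gets `W̄ = α c Σᵢ C(n-1,i) (-1)ⁱ (1/((m+i)(m+i+1))) T̄^{m+i+1}` and hence the
closed autonomous ODE for `T̄`. -/
theorem workload_integration_step
    (n m : ℕ) (hn : 1 ≤ n) (hm : 1 ≤ m) (α : ℝ) (hα : 0 < α)
    (c : ℝ) (hc : c = ((n + m - 1 : ℕ) : ℝ) * ((n + m - 2).choose (n - 1) : ℝ))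
    (T W : ℝ → ℝ)
    (hTc : ContinuousOn T (Set.Ici 0)) (hWc : ContinuousOn W (Set.Ici 0))
    (hT01 : ∀ t ≥ (0:ℝ), T t ∈ Set.Icc (0:ℝ) 1)
    (hW01 : ∀ t ≥ (0:ℝ), W t ∈ Set.Icc (0:ℝ) 1)
    (hTlim : Tendsto T atTop (nhds 0)) (hWlim : Tendsto W atTop (nhds 0))
    (hT' : ∀ t > (0:ℝ), HasDerivAt T (W t - T t) t)
    (hW' : ∀ t > (0:ℝ), HasDerivAt W
      (α * c * (W t - T t) *
        ∑ i ∈ Finset.range n,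
          ((n - 1).choose i : ℝ) * (-1) ^ i * (1 / ((m : ℝ) + i)) * T t ^ (m + i)) t) :
    (∀ t > (0:ℝ), W t = α * c *
        ∑ i ∈ Finset.range n,
          ((n - 1).choose i : ℝ) * (-1) ^ i *
            (1 / (((m : ℝ) + i) * ((m : ℝ) + i + 1))) * T t ^ (m + i + 1)) ∧
      ∀ t > (0:ℝ), HasDerivAt T
        (-T t + α * c *
          ∑ i ∈ Finset.range n,
            ((n - 1).choose i : ℝ) * (-1) ^ i *
              (1 / (((m : ℝ) + i) * ((m : ℝ) + i + 1))) * T t ^ (m + i + 1)) t := by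

  have hm0 : (0:ℝ) < (m:ℝ) := by exact_mod_cast hm
  set S : ℝ → ℝ := fun x => ∑ i ∈ Finset.range n,
      ((n - 1).choose i : ℝ) * (-1) ^ i *
        (1 / (((m : ℝ) + i) * ((m : ℝ) + i + 1))) * x ^ (m + i + 1) with hS
  have hSderiv : ∀ x : ℝ, HasDerivAt S
      (∑ i ∈ Finset.range n,
        ((n - 1).choose i : ℝ) * (-1) ^ i * (1 / ((m : ℝ) + i)) * x ^ (m + i)) x := by
    intro x
    have h : ∀ i ∈ Finset.range n, HasDerivAt
        (fun x : ℝ => ((n - 1).choose i : ℝ) * (-1) ^ i *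
          (1 / (((m : ℝ) + i) * ((m : ℝ) + i + 1))) * x ^ (m + i + 1))
        (((n - 1).choose i : ℝ) * (-1) ^ i * (1 / ((m : ℝ) + i)) * x ^ (m + i)) x := by
      intro i _
      have h1 : HasDerivAt (fun x : ℝ => x ^ (m + i + 1))
          (((m + i + 1 : ℕ) : ℝ) * x ^ (m + i)) x := by
        simpa using hasDerivAt_pow (m + i + 1) x
      have h2 := h1.const_mul (((n - 1).choose i : ℝ) * (-1) ^ i *
          (1 / (((m : ℝ) + i) * ((m : ℝ) + i + 1))))
      refine h2.congr_deriv ?_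
      have hmi : ((m : ℝ) + i) ≠ 0 := by positivity
      have hmi1 : ((m : ℝ) + i + 1) ≠ 0 := by positivity
      push_cast
      field_simp
    exact HasDerivAt.fun_sum h
  have hScont : Continuous S := by
    apply continuous_finset_sum
    intro i _
    exact continuous_const.mul (continuous_pow _)
  have hS0 : S 0 = 0 := by
    simp [hS]
  set F : ℝ → ℝ := fun t => W t - α * c * S (T t) with hF
  have hFderiv : ∀ t > (0:ℝ), HasDerivAt F 0 t := by
    intro t ht
    have h1 := hW' t ht
    have h2 := (HasDerivAt.comp t (hSderiv (T t)) (hT' t ht)).const_mul (α * c)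
    have h3 := h1.sub h2
    refine h3.congr_deriv ?_
    ring
  have hScomp : Tendsto (fun t => S (T t)) atTop (nhds 0) := by
    simpa [hS0, Function.comp_def] using (hScont.tendsto 0).comp hTlim
  have hFlim : Tendsto F atTop (nhds 0) := by
    have := hWlim.sub (hScomp.const_mul (α * c))
    simpa using this
  have hFzero : ∀ t > (0:ℝ), F t = 0 := by
    intro t ht
    have key : ∀ s ≥ t, F s = F t := by
      intro s hs
      have hsub : Set.Icc t s ⊆ Set.Ici (0:ℝ) :=
        Set.Icc_subset_Ici_self.trans (Set.Ici_subset_Ici.mpr ht.le)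
      have hWcmono : ContinuousOn W (Set.Icc t s) := hWc.mono hsub
      have hTcmono : ContinuousOn T (Set.Icc t s) := hTc.mono hsub
      have hFc : ContinuousOn F (Set.Icc t s) :=
        hWcmono.sub (continuousOn_const.mul (hScont.comp_continuousOn hTcmono))
      have := constant_of_has_deriv_right_zero hFc
        (fun x hx => ((hFderiv x (lt_of_lt_of_le ht hx.1)).hasDerivWithinAt))
      exact this s (Set.right_mem_Icc.mpr hs)
    have hconst : Tendsto (fun _ : ℝ => F t) atTop (nhds 0) :=
      hFlim.congr' (Filter.eventually_atTop.mpr ⟨t, fun s hs => key s hs⟩)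
    exact (tendsto_nhds_unique tendsto_const_nhds hconst)
  have part1 : ∀ t > (0:ℝ), W t = α * c *
      ∑ i ∈ Finset.range n,
        ((n - 1).choose i : ℝ) * (-1) ^ i *
          (1 / (((m : ℝ) + i) * ((m : ℝ) + i + 1))) * T t ^ (m + i + 1) := by
    intro t ht
    have h := hFzero t ht
    simp only [hF, hS, sub_eq_zero] at h
    exact h
  refine ⟨part1, fun t ht => ?_⟩
  have h := hT' t ht
  rw [part1 t ht] at h
  convert h using 1
  ring
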